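/- Let f be μ-strongly convex and differentiable with L-Lipschitz gradient, and let Z = X − γ∇f(X) for a step size γ ≤ 1/L. Then for every a: ‖Z − a‖² ≤ (1 − γμ)‖X − a‖² + 2γ(f(a) − f(Z)). -/

import Mathlib

open Filter Topology

variable {E : Type*} [NormedAddCommGroup E] [InnerProductSpace ℝ E] [CompleteSpace E]

lemma line_hasDerivAt (f : E → ℝ) (f' : E → E) (hgrad : ∀ x : E, HasGradientAt f (f' x) x)
    (x v : E) (t : ℝ) :
    HasDerivAt (fun s : ℝ => f (x + s • v)) (inner ℝ (f' (x + t • v)) v : ℝ) t := by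
  have hc : HasDerivAt (fun s : ℝ => x + s • v) v t := by
    simpa using ((hasDerivAt_id t).smul_const v).const_add x
  have hf := (hasGradientAt_iff_hasFDerivAt.mp (hgrad (x + t • v)))
  have := hf.comp_hasDerivAt t hc
  simp [InnerProductSpace.toDual_apply_apply] at this; exact this

/-- First-order strong convexity inequality. -/
lemma strong_convex_lower (f : E → ℝ) (μ : ℝ) (hsc : StrongConvexOn Set.univ μ f)
    (f' : E → E) (hgrad : ∀ x : E, HasGradientAt f (f' x) x) (x y : E) :
    f x + inner ℝ (f' x) (y - x) + μ / 2 * ‖y - x‖ ^ 2 ≤ f y := by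
  have hd : HasDerivAt (fun s : ℝ => f (x + s • (y - x))) (inner ℝ (f' x) (y - x) : ℝ) 0 := by
    simpa using line_hasDerivAt f f' hgrad x (y - x) 0
  have hslope : Tendsto (slope (fun s : ℝ => f (x + s • (y - x))) 0) (𝓝[>] 0)
      (𝓝 (inner ℝ (f' x) (y - x) : ℝ)) :=
    (hasDerivAt_iff_tendsto_slope.mp hd).mono_left
      (nhdsWithin_mono 0 (fun t ht => ne_of_gt ht))
  have hconst : Tendsto (fun t : ℝ => f y - f x - μ / 2 * (1 - t) * ‖x - y‖ ^ 2) (𝓝[>] 0)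
      (𝓝 (f y - f x - μ / 2 * (1 - 0) * ‖x - y‖ ^ 2)) := by
    apply Tendsto.mono_left _ nhdsWithin_le_nhds
    exact Continuous.tendsto (by continuity) 0
  have key : inner ℝ (f' x) (y - x) ≤ f y - f x - μ / 2 * (1 - (0:ℝ)) * ‖x - y‖ ^ 2 := by
    refine le_of_tendsto_of_tendsto hslope hconst ?_
    filter_upwards [Ioo_mem_nhdsGT_of_mem (by norm_num : (0:ℝ) ∈ Set.Ico 0 1)] with t ht
    obtain ⟨ht0, ht1⟩ := ht
    have hcvx := hsc.2 (Set.mem_univ x) (Set.mem_univ y)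
      (by linarith : (0:ℝ) ≤ 1 - t) (le_of_lt ht0) (by ring)
    simp only [smul_eq_mul] at hcvx
    have hpt : (1 - t) • x + t • y = x + t • (y - x) := by module
    rw [hpt] at hcvx
    have hsl : slope (fun s : ℝ => f (x + s • (y - x))) 0 t
        = (f (x + t • (y - x)) - f x) / t := by
      simp [slope_def_field]
    rw [hsl, div_le_iff₀ ht0]
    nlinarith [hcvx, sq_nonneg ‖x - y‖]
  have hxy : ‖x - y‖ = ‖y - x‖ := norm_sub_rev x y
  rw [hxy] at key
  linarith

/-- Descent lemma for L-Lipschitz gradient. -/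
lemma descent_lemma (f : E → ℝ) (L : ℝ) (f' : E → E)
    (hgrad : ∀ x : E, HasGradientAt f (f' x) x)
    (hlip : ∀ x y : E, ‖f' x - f' y‖ ≤ L * ‖x - y‖) (x y : E) :
    f y ≤ f x + inner ℝ (f' x) (y - x) + L / 2 * ‖y - x‖ ^ 2 := by
  set v := y - x with hv
  set φ : ℝ → ℝ := fun t => f (x + t • v) - f x - t * inner ℝ (f' x) v - L * t ^ 2 / 2 * ‖v‖ ^ 2
    with hφ
  have hder : ∀ t : ℝ, HasDerivAt φ
      ((inner ℝ (f' (x + t • v)) v : ℝ) - inner ℝ (f' x) v - L * t * ‖v‖ ^ 2) t := by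
    intro t
    have h1 := line_hasDerivAt f f' hgrad x v t
    have h2 : HasDerivAt (fun t : ℝ => f x + t * inner ℝ (f' x) v + L * t ^ 2 / 2 * ‖v‖ ^ 2)
        (inner ℝ (f' x) v + L * t * ‖v‖ ^ 2) t := by
      have : HasDerivAt (fun t : ℝ => f x + t * inner ℝ (f' x) v + L * t ^ 2 / 2 * ‖v‖ ^ 2)
          (0 + 1 * inner ℝ (f' x) v + L * (2 * t ^ 1) / 2 * ‖v‖ ^ 2) t := by
        exact (((hasDerivAt_const t (f x)).add
          ((hasDerivAt_id t).mul_const _)).add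
          ((((hasDerivAt_pow 2 t).const_mul L).div_const 2).mul_const _))
      convert this using 1
      ring
    have heq : φ = fun s : ℝ =>
        f (x + s • v) - (f x + s * inner ℝ (f' x) v + L * s ^ 2 / 2 * ‖v‖ ^ 2) := by
      funext s; simp only [hφ]; ring
    rw [heq]
    convert h1.sub h2 using 1
    · rfl
    · rfl
    · rfl
    · ring
  have hmono : AntitoneOn φ (Set.Icc 0 1) := by
    apply antitoneOn_of_deriv_nonpos (convex_Icc 0 1)
    · exact fun t _ => ((hder t).differentiableAt).continuousAt.continuousWithinAt
    · exact fun t _ => ((hder t).differentiableAt).differentiableWithinAt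
    · intro t ht
      rw [(hder t).deriv]
      rw [interior_Icc] at ht
      have hb : (inner ℝ (f' (x + t • v)) v : ℝ) - inner ℝ (f' x) v ≤ L * t * ‖v‖ ^ 2 := by
        have h1 : (inner ℝ (f' (x + t • v)) v : ℝ) - inner ℝ (f' x) v
            = inner ℝ (f' (x + t • v) - f' x) v := by rw [inner_sub_left]
        rw [h1]
        calc (inner ℝ (f' (x + t • v) - f' x) v : ℝ) ≤ ‖f' (x + t • v) - f' x‖ * ‖v‖ :=
              real_inner_le_norm _ _
          _ ≤ (L * ‖x + t • v - x‖) * ‖v‖ := by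
              apply mul_le_mul_of_nonneg_right (hlip _ _) (norm_nonneg _)
          _ = L * t * ‖v‖ ^ 2 := by
              have : x + t • v - x = t • v := by abel
              rw [this, norm_smul, Real.norm_eq_abs, abs_of_pos ht.1]; ring
      linarith
  have h01 := hmono (Set.mem_Icc.mpr ⟨le_refl 0, zero_le_one⟩)
    (Set.mem_Icc.mpr ⟨zero_le_one, le_refl 1⟩) zero_le_one
  simp only [hφ, zero_smul, add_zero, one_smul] at h01
  have hxy : x + v = y := by rw [hv]; abel
  rw [hxy] at h01
  nlinarith [h01]

/-- Gradient descent step contraction for a μ-strongly convex function with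
L-Lipschitz gradient and step size γ ≤ 1/L:
‖Z − a‖² ≤ (1 − γμ)‖X − a‖² + 2γ(f(a) − f(Z)) where Z = X − γ∇f(X). -/
theorem stmt_12 (d : ℕ) (f : EuclideanSpace ℝ (Fin d) → ℝ) (μ L γ : ℝ)
    (hμ : 0 < μ) (hL : 0 < L)
    (hsc : StrongConvexOn Set.univ μ f)
    (f' : EuclideanSpace ℝ (Fin d) → EuclideanSpace ℝ (Fin d))
    (hgrad : ∀ x, HasGradientAt f (f' x) x)
    (hlip : ∀ x y : EuclideanSpace ℝ (Fin d), ‖f' x - f' y‖ ≤ L * ‖x - y‖)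
    (hγ0 : 0 < γ) (hγ : γ ≤ 1 / L)
    (X a : EuclideanSpace ℝ (Fin d)) :
    ‖(X - γ • f' X) - a‖ ^ 2 ≤
      (1 - γ * μ) * ‖X - a‖ ^ 2 + 2 * γ * (f a - f (X - γ • f' X)) := by
  set g := f' X with hg
  set Z := X - γ • g with hZ
  have hA := strong_convex_lower f μ hsc f' hgrad X a
  have hB := descent_lemma f L f' hgrad hlip X Z
  have hZX : Z - X = -(γ • g) := by rw [hZ]; abel
  have hiB : (inner ℝ g (Z - X) : ℝ) = -(γ * ‖g‖ ^ 2) := by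
    rw [hZX, inner_neg_right, real_inner_smul_right, real_inner_self_eq_norm_sq]
  have hnB : ‖Z - X‖ ^ 2 = γ ^ 2 * ‖g‖ ^ 2 := by
    rw [hZX, norm_neg, norm_smul, Real.norm_eq_abs, mul_pow, sq_abs]
  rw [hiB, hnB] at hB
  have hiA : (inner ℝ g (a - X) : ℝ) = -(inner ℝ (X - a) g : ℝ) := by
    rw [real_inner_comm, show a - X = -(X - a) from by abel, inner_neg_left]
  rw [hiA] at hA
  have haX : ‖a - X‖ = ‖X - a‖ := norm_sub_rev a X
  rw [haX] at hA
  have hexp : ‖Z - a‖ ^ 2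
      = ‖X - a‖ ^ 2 - 2 * γ * inner ℝ (X - a) g + γ ^ 2 * ‖g‖ ^ 2 := by
    have h1 : Z - a = (X - a) - γ • g := by rw [hZ]; abel
    rw [h1, norm_sub_sq_real, real_inner_smul_right, norm_smul, Real.norm_eq_abs,
      mul_pow, sq_abs]
    ring
  have hLγ : L * γ ≤ 1 := by
    rw [← le_div_iff₀' hL]; exact hγ
  have hfact : (1 - L * γ) * (γ * ‖g‖ ^ 2) ≥ 0 :=
    mul_nonneg (by linarith) (mul_nonneg hγ0.le (sq_nonneg _))
  rw [hexp]
  nlinarith [hA, hB, hfact, sq_nonneg ‖g‖, sq_nonneg ‖X - a‖, hγ0]
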